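/- Let u : ℕ → ℝ be a nonnegative sequence satisfying u_{k+1} ≤ (1 - c/k) u_k + d/k^{p+1} for all k ≥ 1, where d > 0, p > 0, c > p. Then u_k ≤ d (c - p)^{-1} k^{-p} + o(k^{-p}) as k → ∞. -/

import Mathlib

open Filter Asymptotics

private lemma polyak_bern {s q : ℝ} (hs : 0 ≤ s) (hq : 0 ≤ q) :
    1 - q * s ≤ (1 + s) ^ (-q) := by
  have h1 : (0:ℝ) < 1 + s := by linarith
  rw [Real.rpow_def_of_pos h1]
  have hlog : Real.log (1 + s) ≤ s := by
    have := Real.log_le_sub_one_of_pos h1; linarith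
  have hql : q * Real.log (1 + s) ≤ q * s := mul_le_mul_of_nonneg_left hlog hq
  have := Real.add_one_le_exp (Real.log (1 + s) * -q)
  nlinarith

private lemma polyak_split {k : ℝ} (hk : 0 < k) (q : ℝ) :
    (k + 1) ^ (-q) = k ^ (-q) * (1 + 1 / k) ^ (-q) := by
  have h : k + 1 = k * (1 + 1 / k) := by field_simp
  rw [h, Real.mul_rpow hk.le (by positivity)]

theorem polyak_lemma (u : ℕ → ℝ) (c d p : ℝ)
    (hd : 0 < d) (hp : 0 < p) (hc : 0 < c) (hcp : p < c)
    (hnonneg : ∀ k, 1 ≤ k → 0 ≤ u k)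
    (hrec : ∀ k : ℕ, 1 ≤ k → u (k + 1) ≤ (1 - c / k) * u k + d / (k : ℝ) ^ (p + 1)) :
    ∃ r : ℕ → ℝ,
      (∀ k : ℕ, 1 ≤ k → u k ≤ d * (c - p)⁻¹ * (k : ℝ) ^ (-p) + r k) ∧
      r =o[atTop] (fun k : ℕ => (k : ℝ) ^ (-p)) := by
  set a : ℝ := d * (c - p)⁻¹ with ha
  have hcp' : (0:ℝ) < c - p := by linarith
  have ha0 : 0 ≤ a := by positivity
  have had : a * (c - p) = d := by rw [ha, mul_assoc, inv_mul_cancel₀ hcp'.ne', mul_one]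
  set K : ℕ := ⌈c⌉₊ + 1 with hK
  have hKc : c < (K:ℝ) := by
    have := Nat.le_ceil c
    have : c ≤ (⌈c⌉₊ : ℝ) := this
    push_cast [hK]; linarith
  have hK1 : 1 ≤ K := by omega
  have hKpos : (0:ℝ) < K := by exact_mod_cast Nat.pos_of_ne_zero (by omega)
  set B : ℝ := u K * (K:ℝ) ^ c with hB
  have hB0 : 0 ≤ B := mul_nonneg (hnonneg K hK1) (Real.rpow_nonneg hKpos.le _)
  have main : ∀ k, K ≤ k → u k ≤ a * (k:ℝ) ^ (-p) + B * (k:ℝ) ^ (-c) := by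
    intro k hk
    induction k, hk using Nat.le_induction with
    | base =>
      have hBK : B * (K:ℝ) ^ (-c) = u K := by
        rw [hB, mul_assoc, ← Real.rpow_add hKpos]
        simp
      rw [hBK]
      have : 0 ≤ a * (K:ℝ) ^ (-p) := mul_nonneg ha0 (Real.rpow_nonneg hKpos.le _)
      linarith
    | succ k hk ih =>
      have hk1 : 1 ≤ k := le_trans hK1 hk
      have hk0 : (0:ℝ) < k := by exact_mod_cast Nat.pos_of_ne_zero (by omega)
      have hck : c < (k:ℝ) := lt_of_lt_of_le hKc (by exact_mod_cast hk)
      have h1c : 0 ≤ 1 - c / (k:ℝ) := by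
        have : c / (k:ℝ) < 1 := (div_lt_one hk0).mpr hck
        linarith
      have hrk := hrec k hk1
      have hmul : (1 - c / (k:ℝ)) * u k ≤
          (1 - c / (k:ℝ)) * (a * (k:ℝ) ^ (-p) + B * (k:ℝ) ^ (-c)) :=
        mul_le_mul_of_nonneg_left ih h1c
      -- rewrite d / k^(p+1)
      have hdiv : d / (k:ℝ) ^ (p + 1) = d * ((k:ℝ) ^ (-p) / k) := by
        have hkp : ((k:ℝ) ^ p) ≠ 0 := (Real.rpow_pos_of_pos hk0 p).ne'
        rw [Real.rpow_add hk0, Real.rpow_one, Real.rpow_neg hk0.le]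
        field_simp
      -- piece 1
      have hXpos : 0 ≤ (k:ℝ) ^ (-p) := Real.rpow_nonneg hk0.le _
      have piece1 : (1 - c / (k:ℝ)) * (a * (k:ℝ) ^ (-p)) + d / (k:ℝ) ^ (p + 1)
          ≤ a * ((k:ℝ) + 1) ^ (-p) := by
        have heq : (1 - c / (k:ℝ)) * (a * (k:ℝ) ^ (-p)) + d / (k:ℝ) ^ (p + 1)
            = a * ((k:ℝ) ^ (-p) * (1 - p * (1 / k))) := by
          rw [hdiv, ← had]; field_simp; ring
        rw [heq, polyak_split hk0]
        have hb := polyak_bern (s := 1 / (k:ℝ)) (q := p) (by positivity) hp.le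
        have := mul_le_mul_of_nonneg_left hb hXpos
        have := mul_le_mul_of_nonneg_left this ha0
        linarith
      -- piece 2
      have hYpos : 0 ≤ (k:ℝ) ^ (-c) := Real.rpow_nonneg hk0.le _
      have piece2 : (1 - c / (k:ℝ)) * (B * (k:ℝ) ^ (-c)) ≤ B * ((k:ℝ) + 1) ^ (-c) := by
        rw [polyak_split hk0]
        have hb := polyak_bern (s := 1 / (k:ℝ)) (q := c) (by positivity) hc.le
        have h2 : (k:ℝ) ^ (-c) * (1 - c * (1 / k)) ≤ (k:ℝ) ^ (-c) * (1 + 1/k) ^ (-c) :=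
          mul_le_mul_of_nonneg_left hb hYpos
        have h3 := mul_le_mul_of_nonneg_left h2 hB0
        have : (1 - c / (k:ℝ)) = 1 - c * (1 / k) := by ring
        rw [this]
        linarith
      have hcast : ((k + 1 : ℕ) : ℝ) = (k:ℝ) + 1 := by push_cast; ring
      rw [hcast]
      calc u (k + 1) ≤ (1 - c / (k:ℝ)) * u k + d / (k:ℝ) ^ (p + 1) := hrk
        _ ≤ (1 - c / (k:ℝ)) * (a * (k:ℝ) ^ (-p) + B * (k:ℝ) ^ (-c))
              + d / (k:ℝ) ^ (p + 1) := by linarith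
        _ = ((1 - c / (k:ℝ)) * (a * (k:ℝ) ^ (-p)) + d / (k:ℝ) ^ (p + 1))
              + (1 - c / (k:ℝ)) * (B * (k:ℝ) ^ (-c)) := by ring
        _ ≤ a * ((k:ℝ) + 1) ^ (-p) + B * ((k:ℝ) + 1) ^ (-c) := add_le_add piece1 piece2
  refine ⟨fun k => if k < K then u k - a * (k:ℝ) ^ (-p) else B * (k:ℝ) ^ (-c), ?_, ?_⟩
  · intro k hk
    by_cases h : k < K
    · simp [h, ha]
    · simpa [h] using main k (not_lt.mp h)
  · have h1 : (fun x : ℝ => x ^ (-c)) =o[atTop] (fun x : ℝ => x ^ (-p)) := by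
      rw [isLittleO_iff_tendsto']
      · apply (tendsto_rpow_neg_atTop hcp').congr'
        filter_upwards [eventually_gt_atTop (0:ℝ)] with x hx
        rw [show -(c - p) = -c - -p by ring, Real.rpow_sub hx]
      · filter_upwards [eventually_gt_atTop (0:ℝ)] with x hx h0
        exact absurd h0 (Real.rpow_pos_of_pos hx _).ne'
    have ho : (fun k : ℕ => B * (k:ℝ) ^ (-c)) =o[atTop] fun k : ℕ => (k:ℝ) ^ (-p) :=
      ((h1.comp_tendsto tendsto_natCast_atTop_atTop).const_mul_left B)
    apply ho.congr' _ EventuallyEq.rfl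
    filter_upwards [eventually_ge_atTop K] with k hk
    simp [Nat.not_lt.mpr hk]
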